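/- Invariants of the Weyl group action for SU(2): let τ be the ring automorphism of R = LaurentPolynomial ℤ determined by τ(T n) = T (−n) for all n ∈ ℤ (the inversion x ↦ x⁻¹). Then for u ∈ R one has τ(u) = u if and only if u lies in the subalgebra Algebra.adjoin ℤ {T 1 + T (−1)}; that is, the τ-invariant subring of ℤ[x, x⁻¹] is exactly ℤ[x + x⁻¹]. -/

import Mathlib

open LaurentPolynomial

noncomputable section

private lemma pmem_nat (k : ℕ) :
    (T k + T (-(k : ℤ)) : LaurentPolynomial ℤ) ∈
      Algebra.adjoin ℤ ({T 1 + T (-1)} : Set (LaurentPolynomial ℤ)) := by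
  induction k using Nat.strong_induction_on with
  | _ k ih =>
    match k with
    | 0 => simpa using Subalgebra.add_mem _ (one_mem _) (one_mem _)
    | 1 => exact Algebra.subset_adjoin (by norm_num)
    | (k+2) =>
      have h1 := ih (k+1) (by omega)
      have h0 := ih k (by omega)
      have key : (T (k+2 : ℕ) + T (-(k+2 : ℕ) : ℤ) : LaurentPolynomial ℤ)
          = (T 1 + T (-1)) * (T (k+1 : ℕ) + T (-(k+1 : ℕ) : ℤ)) - (T k + T (-(k : ℤ))) := by
        rw [add_mul, mul_add, mul_add, ← T_add, ← T_add, ← T_add, ← T_add]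
        push_cast
        rw [show (1 : ℤ) + (k + 1) = k + 2 by ring, show (1 : ℤ) + -(k+1) = -k by ring,
          show (-1 : ℤ) + (k + 1) = k by ring, show (-1 : ℤ) + -(k+1) = -(k+2) by ring]
        ring
      rw [key]
      exact Subalgebra.sub_mem _
        (Subalgebra.mul_mem _ (Algebra.subset_adjoin rfl) h1) h0

private lemma pmem_int (n : ℤ) :
    (T n + T (-n) : LaurentPolynomial ℤ) ∈
      Algebra.adjoin ℤ ({T 1 + T (-1)} : Set (LaurentPolynomial ℤ)) := by
  rcases le_or_gt 0 n with h | h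
  · simpa [Int.toNat_of_nonneg h] using pmem_nat n.toNat
  · have := pmem_nat (-n).toNat
    rw [Int.toNat_of_nonneg (by omega)] at this
    simpa [add_comm] using this

/-- Weyl invariants for SU(2): if τ is the ring automorphism of ℤ[x, x⁻¹] with
τ(xⁿ) = x⁻ⁿ, then τ(u) = u if and only if u ∈ ℤ[x + x⁻¹]. -/
theorem weyl_invariants_su2
    (τ : LaurentPolynomial ℤ ≃+* LaurentPolynomial ℤ)
    (hτ : ∀ n : ℤ, τ (T n) = T (-n)) :
    ∀ u : LaurentPolynomial ℤ,
      τ u = u ↔ u ∈ Algebra.adjoin ℤ ({T 1 + T (-1)} : Set (LaurentPolynomial ℤ)) := by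
  set A := Algebra.adjoin ℤ ({T 1 + T (-1)} : Set (LaurentPolynomial ℤ)) with hA
  -- τ agrees with `invert`
  have htau : ∀ u : LaurentPolynomial ℤ, τ u = invert u := by
    intro u
    induction u using LaurentPolynomial.induction_on' with
    | add p q hp hq => rw [map_add, map_add, hp, hq]
    | C_mul_T n a =>
        rw [map_mul, map_mul, hτ, invert_T, eq_intCast C a, map_intCast, map_intCast]
  -- hard direction
  have main : ∀ (k : ℕ) (u : LaurentPolynomial ℤ), u.coeff.support.card = k →
      invert u = u → u ∈ A := by
    intro k
    induction k using Nat.strong_induction_on with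
    | _ k ih =>
      intro u hk hu
      rcases Nat.eq_zero_or_pos k with h0 | hpos
      · have : u = 0 := by
          rw [← AddMonoidAlgebra.coeff_eq_zero, ← Finsupp.support_eq_empty, ← Finset.card_eq_zero, hk, h0]
        rw [this]; exact zero_mem _
      · obtain ⟨n, hn⟩ : u.coeff.support.Nonempty := by
          rw [← Finset.card_pos, hk]; exact hpos
        have hsym : ∀ m : ℤ, u.coeff (-m) = u.coeff m := by
          intro m
          conv_rhs => rw [← hu]
          rw [invert_apply]
        set c : ℤ := u.coeff n with hc
        rcases eq_or_ne n 0 with rfl | hn0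
        · -- remove the constant term
          set v : LaurentPolynomial ℤ := u - C c with hv
          have hvinv : invert v = v := by
            rw [hv, map_sub, hu, invert_C]
          have hvsupp : v.coeff.support ⊆ u.coeff.support.erase 0 := by
            intro m hm
            rw [Finsupp.mem_support_iff] at hm
            have hvm : v.coeff m = u.coeff m - (if (0:ℤ) = m then c else 0) := by
              rw [hv, ← single_eq_C, AddMonoidAlgebra.coeff_sub, AddMonoidAlgebra.coeff_single, Finsupp.sub_apply, Finsupp.single_apply]
            rcases eq_or_ne m 0 with rfl | hm0
            · exfalso; apply hm; rw [hvm]; simp [hc]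
            · rw [Finset.mem_erase]
              refine ⟨hm0, Finsupp.mem_support_iff.mpr ?_⟩
              intro h
              apply hm
              rw [hvm, h, if_neg (by omega)]; ring
          have hcard : v.coeff.support.card < k := by
            calc v.coeff.support.card ≤ (u.coeff.support.erase 0).card := Finset.card_le_card hvsupp
              _ < u.coeff.support.card := Finset.card_erase_lt_of_mem hn
              _ = k := hk
          have hvA : v ∈ A := ih _ hcard v rfl hvinv
          have : u = v + C c := by rw [hv]; ring
          rw [this]
          exact Subalgebra.add_mem _ hvA (by rw [eq_intCast C c]; exact intCast_mem A c)
        · set v : LaurentPolynomial ℤ := u - C c * (T n + T (-n)) with hv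
          have hvinv : invert v = v := by
            rw [hv, map_sub, hu, map_mul, map_add, invert_C, invert_T, invert_T, neg_neg,
              add_comm (T (-n))]
          have hvapp : ∀ m : ℤ, v.coeff m =
              u.coeff m - ((if n = m then c else 0) + (if -n = m then c else 0)) := by
            intro m
            rw [hv, mul_add, ← single_eq_C_mul_T, ← single_eq_C_mul_T, AddMonoidAlgebra.coeff_sub,
              AddMonoidAlgebra.coeff_add, AddMonoidAlgebra.coeff_single, AddMonoidAlgebra.coeff_single, Finsupp.sub_apply,
              Finsupp.add_apply, Finsupp.single_apply, Finsupp.single_apply]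
          have hvsupp : v.coeff.support ⊆ u.coeff.support.erase n := by
            intro m hm
            rw [Finsupp.mem_support_iff] at hm
            rcases eq_or_ne m n with rfl | hmn
            · exfalso; apply hm
              rw [hvapp, if_pos rfl, if_neg (by omega), hc]; ring_nf
            · rcases eq_or_ne m (-n) with rfl | hmn'
              · exfalso; apply hm
                rw [hvapp, if_neg (by omega), if_pos rfl, hsym n, ← hc]
                ring
              · rw [Finset.mem_erase]
                refine ⟨hmn, Finsupp.mem_support_iff.mpr ?_⟩
                intro h
                apply hm
                rw [hvapp, h, if_neg (fun hh => hmn hh.symm),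
                  if_neg (fun hh => hmn' hh.symm)]
                ring
          have hcard : v.coeff.support.card < k := by
            calc v.coeff.support.card ≤ (u.coeff.support.erase n).card := Finset.card_le_card hvsupp
              _ < u.coeff.support.card := Finset.card_erase_lt_of_mem hn
              _ = k := hk
          have hvA : v ∈ A := ih _ hcard v rfl hvinv
          have : u = v + C c * (T n + T (-n)) := by rw [hv]; ring
          rw [this]
          exact Subalgebra.add_mem _ hvA
            (Subalgebra.mul_mem _ (by rw [eq_intCast C c]; exact intCast_mem A c)
              (pmem_int n))
  intro u
  constructor
  · intro h
    exact main u.coeff.support.card u rfl (by rw [← htau, h])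
  · intro h
    induction h using Algebra.adjoin_induction with
    | mem x hx =>
        rcases hx with rfl
        rw [map_add, hτ, hτ]; ring
    | algebraMap r => rw [eq_intCast (algebraMap ℤ (LaurentPolynomial ℤ)) r, map_intCast]
    | add x y _ _ hx hy => rw [map_add, hx, hy]
    | mul x y _ _ hx hy => rw [map_mul, hx, hy]
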